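/- arXiv:2501.07281 — 2 statements merged into one kernel-verified Lean document; each statement's English description precedes it below -/
import Mathlib

section
/- For all a ∈ ℂ, c, c' ∈ ℂ \ ℤ_{≤0} and all complex x, y, Ψ₂[a;c,c';x,y] = e^x · Σ_{n≥0} ((a)_n/(c')_n) · ₁F₁[c−a−n; c; −x] · y^n/n!. -/
open Complex

/-- Pochhammer symbol (rising factorial) on `ℂ`. -/
noncomputable def poch (a : ℂ) (n : ℕ) : ℂ := (ascPochhammer ℂ n).eval a

/-- Kummer confluent hypergeometric function `₁F₁[a; c; z]`. -/
noncomputable def F11 (a c z : ℂ) : ℂ :=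
  ∑' n : ℕ, poch a n / poch c n * z ^ n / (Nat.factorial n : ℂ)

/-- The Humbert function `Ψ₂[a; c, c'; x, y]` defined by its double series. -/
noncomputable def Psi2 (a c c' x y : ℂ) : ℂ :=
  ∑' p : ℕ × ℕ, poch a (p.1 + p.2) / (poch c p.1 * poch c' p.2) *
    x ^ p.1 * y ^ p.2 / ((Nat.factorial p.1 : ℂ) * (Nat.factorial p.2 : ℂ))

open Finset
lemma poch_succ (a : ℂ) (n : ℕ) : poch a (n + 1) = poch a n * (a + n) :=
  ascPochhammer_succ_eval n a
lemma poch_eq_prod (a : ℂ) (n : ℕ) : poch a n = ∏ j ∈ range n, (a + j) := by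
  induction n with
  | zero => simp [poch]
  | succ n ih => rw [poch_succ, ih, prod_range_succ]
lemma desc_eq_prod (z : ℂ) (n : ℕ) :
    (descPochhammer ℂ n).eval z = ∏ j ∈ range n, (z - j) := by
  induction n with
  | zero => simp
  | succ n ih => rw [descPochhammer_succ_eval, ih, prod_range_succ]

noncomputable def D (z : ℂ) (n : ℕ) : ℂ := (descPochhammer ℂ n).eval z
lemma D_succ (z : ℂ) (n : ℕ) : D z (n + 1) = D z n * (z - n) := descPochhammer_succ_eval n z
lemma D_zero (z : ℂ) : D z 0 = 1 := by simp [D]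

lemma desc_vandermonde (x y : ℂ) (n : ℕ) :
    ∑ i ∈ range (n + 1), (n.choose i : ℂ) * D x i * D y (n - i)
      = D (x + y) n := by
  induction n with
  | zero => simp [D_zero]
  | succ n ih =>
    rw [sum_range_succ']
    have h1 : ∀ i ∈ range (n + 1),
        ((n+1).choose (i+1) : ℂ) * D x (i+1) * D y (n + 1 - (i+1))
        = (n.choose i : ℂ) * (D x i * (x - i)) * D y (n - i)
          + (n.choose (i+1) : ℂ) * D x (i+1) * D y (n - i) := by
      intro i _
      have e : n + 1 - (i + 1) = n - i := by omega
      rw [e, Nat.choose_succ_succ, Nat.cast_add, D_succ]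
      ring
    rw [sum_congr rfl h1, sum_add_distrib]
    have h2 : ∑ i ∈ range (n + 1), (n.choose (i+1) : ℂ) * D x (i+1) * D y (n - i)
        + ((n+1).choose 0 : ℂ) * D x 0 * D y (n + 1 - 0)
        = ∑ i ∈ range (n + 1), (n.choose i : ℂ) * D x i * (D y (n - i) * (y - (n - i : ℕ))) := by
      rw [sum_range_succ'
        (fun i => (n.choose i : ℂ) * D x i * (D y (n - i) * (y - (n - i : ℕ))))]
      congr 1
      · rw [sum_range_succ, Nat.choose_succ_self]
        simp only [Nat.cast_zero, zero_mul, add_zero]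
        apply sum_congr rfl
        intro k hk
        simp only [mem_range] at hk
        have e : n - k = (n - (k+1)) + 1 := by omega
        rw [e, D_succ y (n - (k+1))]
      · simp [D_zero, D_succ]
    rw [add_assoc, h2, ← sum_add_distrib]
    have h3 : ∀ i ∈ range (n + 1),
        (n.choose i : ℂ) * (D x i * (x - i)) * D y (n - i)
        + (n.choose i : ℂ) * D x i * (D y (n - i) * (y - (n - i : ℕ)))
        = ((n.choose i : ℂ) * D x i * D y (n - i)) * (x + y - n) := by
      intro i hi
      simp only [mem_range] at hi
      have e : ((n - i : ℕ) : ℂ) = (n : ℂ) - i := by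
        push_cast [Nat.cast_sub (by omega : i ≤ n)]; ring
      rw [e]; ring
    rw [sum_congr rfl h3, ← sum_mul, ih, D_succ]

lemma poch_add (a : ℂ) (n m : ℕ) : poch a (n + m) = poch a n * poch (a + n) m := by
  have h := congrArg (Polynomial.eval a) (ascPochhammer_mul (S := ℂ) n m)
  simpa [poch, Polynomial.eval_comp] using h.symm

lemma poch_ne_zero {c : ℂ} (hc : ∀ n : ℕ, c ≠ -n) (m : ℕ) : poch c m ≠ 0 := by
  rw [poch_eq_prod]
  refine prod_ne_zero_iff.2 fun j _ h => hc j (by linear_combination h)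

lemma poch_succ_left (a : ℂ) (n : ℕ) : poch a (n + 1) = a * poch (a + 1) n := by
  have h := congrArg (Polynomial.eval a) (ascPochhammer_succ_left (S := ℂ) n)
  simpa [poch, Polynomial.eval_comp] using h

lemma neg_one_pow_poch (b : ℂ) (i : ℕ) : (-1 : ℂ) ^ i * poch b i = D (-b) i := by
  have h := ascPochhammer_eval_neg_eq_descPochhammer (R := ℂ) (-b) i
  simp only [neg_neg] at h
  rw [poch, h, ← mul_assoc, ← mul_pow]
  simp [D]

lemma desc_eq_poch (z : ℂ) (j : ℕ) : D z j = poch (z - j + 1) j := by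
  induction j generalizing z with
  | zero => simp [D_zero, poch]
  | succ j ih =>
    have e : z - ((j:ℕ)+1 : ℂ) + 1 = z - j := by ring
    rw [D_succ, ih, poch_succ_left]
    push_cast
    rw [e]
    ring

lemma vand_poch (b c : ℂ) (n : ℕ) :
    ∑ i ∈ range (n + 1), (-1 : ℂ) ^ i * (n.choose i : ℂ) * poch b i * poch (c + i) (n - i)
      = poch (c - b) n := by
  have key : ∀ i ∈ range (n + 1),
      (-1 : ℂ) ^ i * (n.choose i : ℂ) * poch b i * poch (c + i) (n - i)
      = (n.choose i : ℂ) * D (-b) i * D (c + n - 1) (n - i) := by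
    intro i hi
    simp only [mem_range] at hi
    have h1 : D (c + n - 1) (n - i) = poch (c + i) (n - i) := by
      rw [desc_eq_poch]
      congr 1
      have : ((n - i : ℕ) : ℂ) = (n : ℂ) - i := by
        push_cast [Nat.cast_sub (by omega : i ≤ n)]; ring
      rw [this]; ring
    rw [h1, ← neg_one_pow_poch]; ring
  rw [sum_congr rfl key, desc_vandermonde]
  rw [desc_eq_poch]
  congr 1
  ring

lemma chu (b c : ℂ) (hc : ∀ n : ℕ, c ≠ -n) (n : ℕ) :
    ∑ i ∈ range (n + 1), (-1 : ℂ) ^ i * (n.choose i : ℂ) * poch b i / poch c i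
      = poch (c - b) n / poch c n := by
  have hn := poch_ne_zero hc n
  rw [eq_div_iff hn, sum_mul]
  rw [← vand_poch b c n]
  refine sum_congr rfl fun i hi => ?_
  have hsplit : poch c n = poch c i * poch (c + i) (n - i) := by
    rw [← poch_add]
    congr 1
    simp only [mem_range] at hi
    omega
  have h0 : poch c i ≠ 0 := poch_ne_zero hc i
  rw [hsplit]
  field_simp

lemma prod_range_cast_factorial (k : ℕ) :
    ∏ j ∈ range k, ((j : ℝ) + 1) = (k.factorial : ℝ) := by
  rw [← Finset.prod_range_add_one_eq_factorial]
  push_cast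
  rfl

lemma norm_poch_le (a : ℂ) (k : ℕ) :
    ‖poch a k‖ ≤ (‖a‖ + 1) ^ k * (k.factorial : ℝ) := by
  rw [poch_eq_prod, norm_prod]
  calc ∏ j ∈ range k, ‖a + (j : ℂ)‖
      ≤ ∏ j ∈ range k, (‖a‖ + 1) * ((j : ℝ) + 1) := by
        refine prod_le_prod (fun j _ => norm_nonneg _) fun j _ => ?_
        calc ‖a + (j : ℂ)‖ ≤ ‖a‖ + ‖(j : ℂ)‖ := norm_add_le _ _
          _ = ‖a‖ + j := by rw [Complex.norm_natCast]
          _ ≤ (‖a‖ + 1) * ((j : ℝ) + 1) := by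
              have h0 : (0:ℝ) ≤ ‖a‖ := norm_nonneg a
              have h1 : (0:ℝ) ≤ (j:ℝ) := Nat.cast_nonneg j
              nlinarith
    _ = (‖a‖ + 1) ^ k * (k.factorial : ℝ) := by
        rw [prod_mul_distrib, prod_const, card_range, prod_range_cast_factorial]

lemma poch_lower (c : ℂ) (hc : ∀ n : ℕ, c ≠ -n) :
    ∃ δ : ℝ, 0 < δ ∧ ∀ m : ℕ, δ ^ m * (m.factorial : ℝ) ≤ ‖poch c m‖ := by
  set N : ℕ := ⌈2 * ‖c‖⌉₊ + 1 with hN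
  have hne : (range N).Nonempty := ⟨0, mem_range.2 (by omega)⟩
  set δ₀ : ℝ := (range N).inf' hne fun j => ‖c + (j : ℂ)‖ / ((j : ℝ) + 1) with hδ₀
  set δ : ℝ := min (1/2) δ₀ with hδ
  have hpos : 0 < δ := by
    refine lt_min (by norm_num) ?_
    refine (Finset.lt_inf'_iff hne).2 fun j _ => ?_
    have h1 : c + (j : ℂ) ≠ 0 := fun h => hc j (by linear_combination h)
    exact div_pos (norm_pos_iff.2 h1) (by positivity)
  refine ⟨δ, hpos, fun m => ?_⟩
  have key : ∀ j : ℕ, δ * ((j : ℝ) + 1) ≤ ‖c + (j : ℂ)‖ := by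
    intro j
    by_cases hj : j < N
    · have h1 : δ ≤ ‖c + (j : ℂ)‖ / ((j : ℝ) + 1) :=
        le_trans (min_le_right _ _) (Finset.inf'_le _ (mem_range.2 hj))
      have h2 : (0:ℝ) < (j : ℝ) + 1 := by positivity
      calc δ * ((j : ℝ) + 1) ≤ (‖c + (j : ℂ)‖ / ((j : ℝ) + 1)) * ((j : ℝ) + 1) := by
            exact mul_le_mul_of_nonneg_right h1 h2.le
        _ = ‖c + (j : ℂ)‖ := div_mul_cancel₀ _ h2.ne'
    · push_neg at hj
      have hce : 2 * ‖c‖ ≤ (⌈2 * ‖c‖⌉₊ : ℝ) := Nat.le_ceil _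
      have hjN : (2 * ‖c‖) + 1 ≤ (j : ℝ) := by
        have : (N : ℝ) ≤ j := Nat.cast_le.2 hj
        rw [hN] at this
        push_cast at this
        linarith
      have hlb : (j : ℝ) - ‖c‖ ≤ ‖c + (j : ℂ)‖ := by
        have h := norm_sub_norm_le ((j : ℂ)) (-c)
        rw [sub_neg_eq_add, norm_neg, Complex.norm_natCast, add_comm] at h
        exact h
      have hhalf : δ * ((j : ℝ) + 1) ≤ (1/2) * ((j : ℝ) + 1) := by
        have : (0:ℝ) ≤ (j : ℝ) + 1 := by positivity
        exact mul_le_mul_of_nonneg_right (min_le_left _ _) this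
      have : (1/2 : ℝ) * ((j : ℝ) + 1) ≤ (j : ℝ) - ‖c‖ := by linarith
      linarith
  rw [poch_eq_prod, norm_prod]
  calc δ ^ m * (m.factorial : ℝ) = ∏ j ∈ range m, δ * ((j : ℝ) + 1) := by
        rw [prod_mul_distrib, prod_const, card_range, prod_range_cast_factorial]
    _ ≤ ∏ j ∈ range m, ‖c + (j : ℂ)‖ := by
        refine prod_le_prod (fun j _ => ?_) fun j _ => key j
        positivity


lemma summable_norm_F11 (b c x : ℂ) (hc : ∀ n : ℕ, c ≠ -n) :
    Summable fun m : ℕ => ‖poch b m / poch c m * x ^ m / (Nat.factorial m : ℂ)‖ := by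
  obtain ⟨δ, hδ, hlow⟩ := poch_lower c hc
  set r : ℝ := (‖b‖ + 1) * ‖x‖ / δ with hr
  refine Summable.of_nonneg_of_le (fun m => norm_nonneg _) (fun m => ?_)
    (Real.summable_pow_div_factorial r)
  have hfm : (0:ℝ) < (Nat.factorial m : ℝ) := by positivity
  have hlowm := hlow m
  have hposc : (0:ℝ) < ‖poch c m‖ := lt_of_lt_of_le (by positivity) hlowm
  have hnorm : ‖poch b m / poch c m * x ^ m / (Nat.factorial m : ℂ)‖
      = ‖poch b m‖ * ‖x‖ ^ m / (‖poch c m‖ * (Nat.factorial m : ℝ)) := by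
    simp only [norm_div, norm_mul, norm_pow, Complex.norm_natCast]
    ring
  rw [hnorm]
  have h1 : ‖poch b m‖ * ‖x‖ ^ m ≤ ((‖b‖ + 1) ^ m * (Nat.factorial m : ℝ)) * ‖x‖ ^ m :=
    mul_le_mul_of_nonneg_right (norm_poch_le b m) (by positivity)
  have h2 : (δ ^ m * (Nat.factorial m : ℝ)) * (Nat.factorial m : ℝ)
      ≤ ‖poch c m‖ * (Nat.factorial m : ℝ) :=
    mul_le_mul_of_nonneg_right hlowm hfm.le
  calc ‖poch b m‖ * ‖x‖ ^ m / (‖poch c m‖ * (Nat.factorial m : ℝ))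
      ≤ ((‖b‖ + 1) ^ m * (Nat.factorial m : ℝ)) * ‖x‖ ^ m
        / ((δ ^ m * (Nat.factorial m : ℝ)) * (Nat.factorial m : ℝ)) := by
        refine div_le_div₀ (by positivity) h1 (by positivity) h2
    _ = r ^ m / (Nat.factorial m : ℝ) := by
        rw [hr, div_pow, mul_pow]
        field_simp

lemma summable_F11 (b c x : ℂ) (hc : ∀ n : ℕ, c ≠ -n) :
    Summable fun m : ℕ => poch b m / poch c m * x ^ m / (Nat.factorial m : ℂ) :=
  (summable_norm_F11 b c x hc).of_norm

lemma summable_norm_exp (x : ℂ) :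
    Summable fun m : ℕ => ‖x ^ m / (Nat.factorial m : ℂ)‖ := by
  refine Summable.of_nonneg_of_le (fun m => norm_nonneg _) (fun m => ?_)
    (Real.summable_pow_div_factorial ‖x‖)
  rw [norm_div, norm_pow, Complex.norm_natCast]

lemma exp_eq_tsum' (x : ℂ) : Complex.exp x = ∑' m : ℕ, x ^ m / (Nat.factorial m : ℂ) := by
  rw [Complex.exp_eq_exp_ℂ, NormedSpace.exp_eq_tsum_div]

/-- Kummer's transformation. -/
lemma kummer (b c x : ℂ) (hc : ∀ n : ℕ, c ≠ -n) :
    Complex.exp x * F11 (c - b) c (-x) = F11 b c x := by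
  rw [exp_eq_tsum', F11, F11,
    tsum_mul_tsum_eq_tsum_sum_range_of_summable_norm (summable_norm_exp x)
      (summable_norm_F11 (c - b) c (-x) hc)]
  refine tsum_congr fun n => ?_
  have hfn : (Nat.factorial n : ℂ) ≠ 0 := Nat.cast_ne_zero.2 (Nat.factorial_ne_zero n)
  have hstep : ∀ k ∈ range (n + 1),
      x ^ k / (Nat.factorial k : ℂ)
        * (poch (c - b) (n - k) / poch c (n - k) * (-x) ^ (n - k) / (Nat.factorial (n - k) : ℂ))
      = ((-1 : ℂ) ^ (n - k) * ((Nat.factorial n : ℂ) / ((Nat.factorial k : ℂ)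
          * (Nat.factorial (n - k) : ℂ))) * poch (c - b) (n - k) / poch c (n - k))
        * (x ^ n / (Nat.factorial n : ℂ)) := by
    intro k hk
    simp only [mem_range] at hk
    have hfk : (Nat.factorial k : ℂ) ≠ 0 := Nat.cast_ne_zero.2 (Nat.factorial_ne_zero k)
    have hfnk : (Nat.factorial (n - k) : ℂ) ≠ 0 := Nat.cast_ne_zero.2 (Nat.factorial_ne_zero _)
    have hxk : x ^ k * (-x) ^ (n - k) = (-1 : ℂ) ^ (n - k) * x ^ n := by
      have hp : x ^ k * x ^ (n - k) = x ^ n := by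
        rw [← pow_add]; congr 1; omega
      rw [neg_pow]
      linear_combination ((-1 : ℂ) ^ (n - k)) * hp
    calc x ^ k / (Nat.factorial k : ℂ)
        * (poch (c - b) (n - k) / poch c (n - k) * (-x) ^ (n - k) / (Nat.factorial (n - k) : ℂ))
        = (x ^ k * (-x) ^ (n - k)) * (poch (c - b) (n - k)
            / (poch c (n - k) * (Nat.factorial k : ℂ) * (Nat.factorial (n - k) : ℂ))) := by
          ring
      _ = ((-1 : ℂ) ^ (n - k) * x ^ n) * (poch (c - b) (n - k)
            / (poch c (n - k) * (Nat.factorial k : ℂ) * (Nat.factorial (n - k) : ℂ))) := by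
          rw [hxk]
      _ = ((-1 : ℂ) ^ (n - k) * ((Nat.factorial n : ℂ) / ((Nat.factorial k : ℂ)
            * (Nat.factorial (n - k) : ℂ))) * poch (c - b) (n - k) / poch c (n - k))
          * (x ^ n / (Nat.factorial n : ℂ)) := by
          have hQ : poch c (n - k) ≠ 0 := poch_ne_zero hc _
          field_simp
  rw [sum_congr rfl hstep, ← sum_mul]
  have hcoef : ∑ k ∈ range (n + 1), ((-1 : ℂ) ^ (n - k) * ((Nat.factorial n : ℂ)
        / ((Nat.factorial k : ℂ) * (Nat.factorial (n - k) : ℂ)))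
        * poch (c - b) (n - k) / poch c (n - k))
      = poch b n / poch c n := by
    rw [← Finset.sum_range_reflect]
    have hterm : ∀ j ∈ range (n + 1),
        ((-1 : ℂ) ^ (n - (n + 1 - 1 - j)) * ((Nat.factorial n : ℂ)
          / ((Nat.factorial (n + 1 - 1 - j) : ℂ) * (Nat.factorial (n - (n + 1 - 1 - j)) : ℂ)))
          * poch (c - b) (n - (n + 1 - 1 - j)) / poch c (n - (n + 1 - 1 - j)))
        = (-1 : ℂ) ^ j * (n.choose j : ℂ) * poch (c - b) j / poch c j := by
      intro j hj
      simp only [mem_range] at hj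
      have e1 : n + 1 - 1 - j = n - j := by omega
      have e2 : n - (n - j) = j := by omega
      rw [e1, e2]
      have hch : (n.choose j : ℂ) * ((Nat.factorial j : ℂ) * (Nat.factorial (n - j) : ℂ))
          = (Nat.factorial n : ℂ) := by
        have h0 := Nat.choose_mul_factorial_mul_factorial (show j ≤ n by omega)
        have h1 : ((n.choose j * j.factorial * (n - j).factorial : ℕ) : ℂ)
            = ((n.factorial : ℕ) : ℂ) := by exact_mod_cast congrArg (Nat.cast (R := ℂ)) h0
        push_cast at h1
        linear_combination h1
      have hfj : (Nat.factorial j : ℂ) ≠ 0 := Nat.cast_ne_zero.2 (Nat.factorial_ne_zero j)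
      have hfnj : (Nat.factorial (n - j) : ℂ) ≠ 0 := Nat.cast_ne_zero.2 (Nat.factorial_ne_zero _)
      have : (Nat.factorial n : ℂ) / ((Nat.factorial (n - j) : ℂ) * (Nat.factorial j : ℂ))
          = (n.choose j : ℂ) := by
        rw [← hch, mul_comm (Nat.factorial (n - j) : ℂ) (Nat.factorial j : ℂ), mul_div_assoc,
          div_self (mul_ne_zero hfj hfnj), mul_one]
      rw [this]
    rw [sum_congr rfl hterm, chu (c - b) c hc n]
    congr 2
    ring
  rw [hcoef]
  ring

lemma choose_le_two_pow' (n k : ℕ) : n.choose k ≤ 2 ^ n := by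
  rcases le_or_gt k n with h | h
  · calc n.choose k ≤ ∑ i ∈ range (n + 1), n.choose i :=
        Finset.single_le_sum (fun i _ => Nat.zero_le _) (mem_range.2 (by omega))
      _ = 2 ^ n := Nat.sum_range_choose n
  · rw [Nat.choose_eq_zero_of_lt h]; exact Nat.zero_le _

lemma factorial_add_le (m n : ℕ) :
    (m + n).factorial ≤ 2 ^ (m + n) * (m.factorial * n.factorial) := by
  calc (m + n).factorial = (m + n).choose n * m.factorial * n.factorial :=
        (Nat.add_choose_mul_factorial_mul_factorial m n).symm
    _ ≤ 2 ^ (m + n) * m.factorial * n.factorial := by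
        gcongr
        exact choose_le_two_pow' (m + n) n
    _ = 2 ^ (m + n) * (m.factorial * n.factorial) := by ring


lemma summable_psi2 (a c c' x y : ℂ) (hc : ∀ n : ℕ, c ≠ -n) (hc' : ∀ n : ℕ, c' ≠ -n) :
    Summable fun p : ℕ × ℕ => poch a (p.1 + p.2) / (poch c p.1 * poch c' p.2) *
      x ^ p.1 * y ^ p.2 / ((Nat.factorial p.1 : ℂ) * (Nat.factorial p.2 : ℂ)) := by
  obtain ⟨δ, hδ, hlow⟩ := poch_lower c hc
  obtain ⟨δ', hδ', hlow'⟩ := poch_lower c' hc'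
  set u : ℝ := 2 * (‖a‖ + 1) * ‖x‖ / δ with hu
  set v : ℝ := 2 * (‖a‖ + 1) * ‖y‖ / δ' with hv
  refine Summable.of_norm (Summable.of_nonneg_of_le (fun p => norm_nonneg _) (fun p => ?_)
    ((Real.summable_pow_div_factorial u).mul_of_nonneg (Real.summable_pow_div_factorial v)
      (fun m => by positivity) (fun n => by positivity)))
  obtain ⟨m, n⟩ := p
  simp only
  have hfm : (0:ℝ) < (Nat.factorial m : ℝ) := by positivity
  have hfn : (0:ℝ) < (Nat.factorial n : ℝ) := by positivity
  have hpc : (0:ℝ) < ‖poch c m‖ := lt_of_lt_of_le (by positivity) (hlow m)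
  have hpc' : (0:ℝ) < ‖poch c' n‖ := lt_of_lt_of_le (by positivity) (hlow' n)
  have hnorm : ‖poch a (m + n) / (poch c m * poch c' n) *
      x ^ m * y ^ n / ((Nat.factorial m : ℂ) * (Nat.factorial n : ℂ))‖
      = ‖poch a (m + n)‖ * ‖x‖ ^ m * ‖y‖ ^ n
        / (‖poch c m‖ * ‖poch c' n‖ * ((Nat.factorial m : ℝ) * (Nat.factorial n : ℝ))) := by
    simp only [norm_div, norm_mul, norm_pow, Complex.norm_natCast]
    ring
  rw [hnorm]
  have hnum : ‖poch a (m + n)‖ * ‖x‖ ^ m * ‖y‖ ^ n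
      ≤ ((‖a‖ + 1) ^ (m + n) * (2 ^ (m + n) * ((Nat.factorial m : ℝ) * (Nat.factorial n : ℝ))))
        * ‖x‖ ^ m * ‖y‖ ^ n := by
    gcongr
    calc ‖poch a (m + n)‖ ≤ (‖a‖ + 1) ^ (m + n) * ((m + n).factorial : ℝ) := norm_poch_le a (m + n)
      _ ≤ (‖a‖ + 1) ^ (m + n) * (2 ^ (m + n) * ((Nat.factorial m : ℝ) * (Nat.factorial n : ℝ))) := by
          gcongr
          exact_mod_cast factorial_add_le m n
  have hden : (δ ^ m * (Nat.factorial m : ℝ)) * (δ' ^ n * (Nat.factorial n : ℝ))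
        * ((Nat.factorial m : ℝ) * (Nat.factorial n : ℝ))
      ≤ ‖poch c m‖ * ‖poch c' n‖ * ((Nat.factorial m : ℝ) * (Nat.factorial n : ℝ)) := by
    gcongr ?_ * ?_ * ?_
    · exact hlow m
    · exact hlow' n
  calc ‖poch a (m + n)‖ * ‖x‖ ^ m * ‖y‖ ^ n
      / (‖poch c m‖ * ‖poch c' n‖ * ((Nat.factorial m : ℝ) * (Nat.factorial n : ℝ)))
      ≤ ((‖a‖ + 1) ^ (m + n) * (2 ^ (m + n) * ((Nat.factorial m : ℝ) * (Nat.factorial n : ℝ))))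
        * ‖x‖ ^ m * ‖y‖ ^ n
        / ((δ ^ m * (Nat.factorial m : ℝ)) * (δ' ^ n * (Nat.factorial n : ℝ))
          * ((Nat.factorial m : ℝ) * (Nat.factorial n : ℝ))) :=
        div_le_div₀ (by positivity) hnum (by positivity) hden
    _ = u ^ m / (Nat.factorial m : ℝ) * (v ^ n / (Nat.factorial n : ℝ)) := by
        rw [hu, hv, div_pow, div_pow, pow_add, pow_add, mul_pow, mul_pow, mul_pow, mul_pow]
        field_simp

/-- `Ψ₂[a;c,c';x,y] = Σ_{n≥0} ((a)_n/(c')_n) ₁F₁[a+n; c; x] y^n/n!`. -/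
theorem psi2_kummer_expansion (a c c' x y : ℂ)
    (hc : ∀ n : ℕ, c ≠ -n) (hc' : ∀ n : ℕ, c' ≠ -n) :
    Psi2 a c c' x y
      = Complex.exp x * ∑' n : ℕ, poch a n / poch c' n * F11 (c - a - n) c (-x) * y ^ n /
          (Nat.factorial n : ℂ) := by
  set f : ℕ × ℕ → ℂ := fun p => poch a (p.1 + p.2) / (poch c p.1 * poch c' p.2) *
    x ^ p.1 * y ^ p.2 / ((Nat.factorial p.1 : ℂ) * (Nat.factorial p.2 : ℂ)) with hf
  have S : Summable f := summable_psi2 a c c' x y hc hc'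
  have hswap : Psi2 a c c' x y = ∑' q : ℕ × ℕ, f (q.2, q.1) := by
    rw [Psi2]
    exact ((Equiv.prodComm ℕ ℕ).tsum_eq f).symm
  have hg : Summable fun q : ℕ × ℕ => f (q.2, q.1) :=
    (Equiv.prodComm ℕ ℕ).summable_iff.2 S
  have hinner : ∀ n : ℕ, (∑' m : ℕ, f (m, n))
      = (poch a n / poch c' n * y ^ n / (Nat.factorial n : ℂ)) * F11 (a + n) c x := by
    intro n
    rw [F11, ← tsum_mul_left]
    refine tsum_congr fun m => ?_
    simp only [hf]
    rw [show m + n = n + m from add_comm m n, poch_add]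
    ring
  calc Psi2 a c c' x y = ∑' q : ℕ × ℕ, f (q.2, q.1) := hswap
    _ = ∑' n : ℕ, ∑' m : ℕ, f (m, n) := Summable.tsum_prod' hg fun n => hg.prod_factor n
    _ = ∑' n : ℕ, (poch a n / poch c' n * y ^ n / (Nat.factorial n : ℂ)) * F11 (a + n) c x :=
        tsum_congr hinner
    _ = ∑' n : ℕ, Complex.exp x
          * (poch a n / poch c' n * F11 (c - a - n) c (-x) * y ^ n / (Nat.factorial n : ℂ)) := by
        refine tsum_congr fun n => ?_
        rw [← kummer (a + n) c x hc, show c - (a + (n : ℂ)) = c - a - n from by ring]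
        ring
    _ = Complex.exp x * ∑' n : ℕ, poch a n / poch c' n * F11 (c - a - n) c (-x) * y ^ n /
          (Nat.factorial n : ℂ) := tsum_mul_left
end

section
/- For Re(a) > 0, b ∈ ℂ, c, c' ∈ ℂ \ ℤ_{≤0}, x real with 0 < x, and y > 0 with y²/x in the domain of convergence, the Humbert function Ψ₁ admits the integral representation Ψ₁[a,b;c,c';−x, y²/x] = (2Γ(c')/Γ(a)) · x^{−a} · (y/x)^{1−c'} · ∫₀^∞ w^{2a−c'} e^{−w²/x} ₁F₁[b;c;−w²] I_{c'−1}(2(y/x)w) dw. -/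
open Complex MeasureTheory Filter Topology

/-- Confluent hypergeometric limit function `₀F₁[−; b; z]`. -/
noncomputable def F01 (b z : ℂ) : ℂ :=
  ∑' k : ℕ, z ^ k / (poch b k * (Nat.factorial k : ℂ))

/-- The Humbert function `Ψ₁[a,b;c,c';x,y]` given by its Laplace-type integral
representation, valid for `Re a > 0` and `Re x < 1` (and providing the analytic
continuation of the double series to negative real `x`). -/
noncomputable def Psi1 (a b c c' x y : ℂ) : ℂ :=
  (Complex.Gamma a)⁻¹ *
    ∫ u in Set.Ioi (0 : ℝ), (u : ℂ) ^ (a - 1) * Complex.exp (-(u : ℂ)) *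
      F11 b c (x * u) * F01 c' (y * u)

/-- Modified Bessel function of the first kind `I_ν(z)` (principal branch). -/
noncomputable def besselI (ν z : ℂ) : ℂ :=
  (z / 2) ^ ν * ∑' k : ℕ, (z ^ 2 / 4) ^ k /
    ((Nat.factorial k : ℂ) * Complex.Gamma (ν + k + 1))

lemma sq_cpow (w : ℝ) (hw : 0 < w) (s : ℂ) : ((w:ℂ)^2) ^ s = (w:ℂ) ^ (2 * s) := by
  rw [← Complex.cpow_nat_mul' (x := (w:ℂ)) (n := 2) ?_ ?_ s] <;>
    simp [Complex.arg_ofReal_of_nonneg hw.le, Real.pi_pos, Real.pi_pos.le, Real.pi_nonneg]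

lemma pow_identity (a c' : ℂ) {x y w : ℝ} (hx : 0 < x) (hy : 0 < y) (hw : 0 < w) :
    ((2*w/x : ℝ) : ℂ) * (((w:ℂ))^2/(x:ℂ))^(a-1)
      = 2 * (x:ℂ)^(-a) * ((y:ℂ)/x)^(1-c') * ((w:ℂ)^(2*a-c') * (((y:ℂ)/x)*w)^(c'-1)) := by
  have hW : (w:ℂ) ≠ 0 := Complex.ofReal_ne_zero.2 hw.ne'
  have hX : (x:ℂ) ≠ 0 := Complex.ofReal_ne_zero.2 hx.ne'
  have hYX : (y:ℂ)/x ≠ 0 := div_ne_zero (Complex.ofReal_ne_zero.2 hy.ne') hX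
  have hargx : (Complex.arg x) ≠ Real.pi := by
    rw [Complex.arg_ofReal_of_nonneg hx.le]; exact Real.pi_ne_zero.symm
  have h1 : (((w:ℂ))^2/(x:ℂ))^(a-1) = (w:ℂ)^(2*(a-1)) * ((x:ℂ)^(a-1))⁻¹ := by
    rw [div_eq_mul_inv, show ((w:ℂ)^2 * (x:ℂ)⁻¹) = (↑(w^2) : ℂ) * (↑(x⁻¹) : ℂ) by push_cast; ring,
      Complex.mul_cpow_ofReal_nonneg (by positivity) (by positivity),
      Complex.ofReal_pow, sq_cpow w hw, Complex.ofReal_inv, Complex.inv_cpow _ _ hargx]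
  have h2 : (((y:ℂ)/x)*w)^(c'-1) = ((y:ℂ)/x)^(c'-1) * (w:ℂ)^(c'-1) := by
    rw [show ((y:ℂ)/x) = (↑(y/x) : ℂ) by push_cast; ring,
      Complex.mul_cpow_ofReal_nonneg (by positivity) hw.le]
  rw [h1, h2]
  have cw : (w:ℂ)^(2*a-c') * (w:ℂ)^(c'-1) = (w:ℂ)^(2*(a-1)) * (w:ℂ) := by
    rw [← Complex.cpow_add _ _ hW, show (2*a-c')+(c'-1) = 2*(a-1) + 1 by ring,
      Complex.cpow_add _ _ hW, Complex.cpow_one]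
  have cy : ((y:ℂ)/x)^(1-c') * ((y:ℂ)/x)^(c'-1) = 1 := by
    rw [← Complex.cpow_add _ _ hYX, show (1-c')+(c'-1) = 0 by ring, Complex.cpow_zero]
  have cx : (x:ℂ)^(-a) = ((x:ℂ))⁻¹ * ((x:ℂ)^(a-1))⁻¹ := by
    rw [← Complex.cpow_neg, ← Complex.cpow_neg_one, ← Complex.cpow_add _ _ hX,
      show (-1:ℂ) + -(a-1) = -a by ring]
  calc ((2*w/x : ℝ) : ℂ) * ((w:ℂ)^(2*(a-1)) * ((x:ℂ)^(a-1))⁻¹)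
      = 2 * ((x:ℂ)⁻¹ * ((x:ℂ)^(a-1))⁻¹) * ((w:ℂ)^(2*(a-1)) * (w:ℂ)) := by push_cast; ring
    _ = 2 * (x:ℂ)^(-a) * (((y:ℂ)/x)^(1-c') * ((y:ℂ)/x)^(c'-1)) *
          ((w:ℂ)^(2*a-c') * (w:ℂ)^(c'-1)) := by rw [cx, cy, cw]; ring
    _ = 2 * (x:ℂ)^(-a) * ((y:ℂ)/x)^(1-c') *
          ((w:ℂ)^(2*a-c') * (((y:ℂ)/x)^(c'-1) * (w:ℂ)^(c'-1))) := by ring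

lemma gamma_poch (c' : ℂ) (hc' : ∀ n : ℕ, c' ≠ -n) (k : ℕ) :
    Complex.Gamma (c' + k) = poch c' k * Complex.Gamma c' := by
  induction k with
  | zero => simp [poch]
  | succ k ih =>
    have hne : c' + k ≠ 0 := by
      intro h; exact hc' k (by linear_combination h)
    have h : c' + (k+1 : ℕ) = (c' + k) + 1 := by push_cast; ring
    rw [h, Complex.Gamma_add_one _ hne, ih, show poch c' (k+1) = poch c' k * (c' + k) by
      simp [poch, ascPochhammer_succ_right]]
    ring

lemma besselI_eq_F01 (c' : ℂ) (hc' : ∀ n : ℕ, c' ≠ -n) (z : ℂ) :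
    besselI (c' - 1) z = (z/2) ^ (c'-1) * (Complex.Gamma c')⁻¹ * F01 c' (z^2/4) := by
  rw [besselI, F01, mul_assoc]
  congr 1
  rw [← tsum_mul_left]
  congr 1; funext k
  rw [show c' - 1 + k + 1 = c' + k by ring, gamma_poch c' hc' k,
    div_eq_mul_inv, div_eq_mul_inv, mul_inv, mul_inv]
  ring

/-- Integral representation of `Ψ₁[a,b;c,c';−x, y²/x]` in terms of a modified
Bessel function, for real `x, y > 0`. -/
theorem psi1_bessel_integral_rep (a b c c' : ℂ) (x y : ℝ)
    (ha : 0 < a.re) (hc : ∀ n : ℕ, c ≠ -n) (hc' : ∀ n : ℕ, c' ≠ -n)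
    (hx : 0 < x) (hy : 0 < y) :
    Psi1 a b c c' (-(x : ℂ)) ((y : ℂ) ^ 2 / x)
      = 2 * Complex.Gamma c' / Complex.Gamma a * (x : ℂ) ^ (-a) *
          ((y : ℂ) / x) ^ (1 - c') *
          ∫ w in Set.Ioi (0 : ℝ), (w : ℂ) ^ (2 * a - c') *
            Complex.exp (-(w : ℂ) ^ 2 / x) * F11 b c (-(w : ℂ) ^ 2) *
            besselI (c' - 1) (2 * ((y : ℂ) / x) * w) := by
  have hX : (x:ℂ) ≠ 0 := Complex.ofReal_ne_zero.2 hx.ne'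
  have hGc' : Complex.Gamma c' ≠ 0 := Complex.Gamma_ne_zero hc'
  -- change of variables u = w^2/x
  have himg : (fun w : ℝ => w^2 / x) '' Set.Ioi 0 = Set.Ioi 0 := by
    ext u
    simp only [Set.mem_image, Set.mem_Ioi]
    constructor
    · rintro ⟨w, hw, rfl⟩; positivity
    · intro hu
      refine ⟨Real.sqrt (u*x), by positivity, ?_⟩
      rw [Real.sq_sqrt (by positivity)]
      field_simp
  have hderiv : ∀ w ∈ Set.Ioi (0:ℝ),
      HasDerivWithinAt (fun w : ℝ => w^2/x) (2*w/x) (Set.Ioi 0) w := by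
    intro w _
    simpa using ((hasDerivAt_pow 2 w).div_const x).hasDerivWithinAt
  have hinj : Set.InjOn (fun w : ℝ => w^2/x) (Set.Ioi 0) := by
    intro w1 h1 w2 h2 h
    simp only [Set.mem_Ioi] at h1 h2
    field_simp at h
    nlinarith [h, h1, h2]
  have step1 : (∫ u in Set.Ioi (0:ℝ), (u : ℂ) ^ (a - 1) * Complex.exp (-(u : ℂ)) *
        F11 b c ((-(x:ℂ)) * u) * F01 c' (((y:ℂ)^2/x) * u))
      = ∫ w in Set.Ioi (0:ℝ), |2*w/x| •
          ((((w^2/x : ℝ)):ℂ) ^ (a - 1) * Complex.exp (-((w^2/x : ℝ):ℂ)) *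
            F11 b c ((-(x:ℂ)) * ((w^2/x : ℝ):ℂ)) * F01 c' (((y:ℂ)^2/x) * ((w^2/x : ℝ):ℂ))) := by
    conv_lhs => rw [← himg]
    rw [integral_image_eq_integral_abs_deriv_smul measurableSet_Ioi hderiv hinj]
  have step2 : (∫ w in Set.Ioi (0:ℝ), |2*w/x| •
          ((((w^2/x : ℝ)):ℂ) ^ (a - 1) * Complex.exp (-((w^2/x : ℝ):ℂ)) *
            F11 b c ((-(x:ℂ)) * ((w^2/x : ℝ):ℂ)) * F01 c' (((y:ℂ)^2/x) * ((w^2/x : ℝ):ℂ))))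
      = ∫ w in Set.Ioi (0:ℝ), (2 * Complex.Gamma c' * (x:ℂ)^(-a) * ((y:ℂ)/x)^(1-c')) *
          ((w : ℂ) ^ (2 * a - c') * Complex.exp (-(w : ℂ) ^ 2 / x) * F11 b c (-(w : ℂ) ^ 2) *
            besselI (c' - 1) (2 * ((y : ℂ) / x) * w)) := by
    refine setIntegral_congr_fun measurableSet_Ioi (fun w hw => ?_)
    simp only [Set.mem_Ioi] at hw
    have habs : |2*w/x| = 2*w/x := abs_of_pos (by positivity)
    rw [habs, Complex.real_smul]
    rw [show ((w^2/x : ℝ):ℂ) = (w:ℂ)^2/(x:ℂ) by push_cast; ring]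
    rw [show (-(x:ℂ)) * ((w:ℂ)^2/x) = -(w:ℂ)^2 by field_simp]
    rw [show ((y:ℂ)^2/x) * ((w:ℂ)^2/x) = (2*((y:ℂ)/x)*(w:ℂ))^2/4 by field_simp; ring]
    rw [neg_div]
    have hGB : Complex.Gamma c' * besselI (c'-1) (2*((y:ℂ)/x)*w)
        = ((y:ℂ)/x*(w:ℂ))^(c'-1) * F01 c' ((2*((y:ℂ)/x)*(w:ℂ))^2/4) := by
      rw [besselI_eq_F01 c' hc', show (2*((y:ℂ)/x)*(w:ℂ))/2 = (y:ℂ)/x*(w:ℂ) by ring]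
      field_simp
    have hpi := pow_identity a c' hx hy hw
    linear_combination
      (Complex.exp (-((w:ℂ)^2/(x:ℂ))) * F11 b c (-(w:ℂ)^2) *
        F01 c' ((2*((y:ℂ)/x)*(w:ℂ))^2/4)) * hpi
      - (2 * (x:ℂ)^(-a) * ((y:ℂ)/x)^(1-c') * (w:ℂ)^(2*a-c') *
          Complex.exp (-((w:ℂ)^2/(x:ℂ))) * F11 b c (-(w:ℂ)^2)) * hGB
  rw [Psi1, step1, step2, integral_const_mul, div_eq_mul_inv]
  ring
end
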